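/- The cyclic group generated by the rotatory reflection ργ (rotation by 2π/q about an axis composed with reflection in the orthogonal plane) contains -I if and only if q ≡ 2 mod 4. -/

import Mathlib

open Real Matrix

private noncomputable def Mθ (θ ε : ℝ) : Matrix (Fin 3) (Fin 3) ℝ :=
  !![Real.cos θ, -Real.sin θ, 0; Real.sin θ, Real.cos θ, 0; 0, 0, ε]

private lemma Mθ_mul (θ θ' ε ε' : ℝ) : Mθ θ ε * Mθ θ' ε' = Mθ (θ + θ') (ε * ε') := by
  ext i j
  fin_cases i <;> fin_cases j <;>
    simp [Mθ, Matrix.mul_apply, Fin.sum_univ_three, Real.cos_add, Real.sin_add] <;> ring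

private lemma Mθ_pow (θ ε : ℝ) (n : ℕ) : (Mθ θ ε) ^ n = Mθ (n * θ) (ε ^ n) := by
  induction n with
  | zero =>
    ext i j
    fin_cases i <;> fin_cases j <;> simp [Mθ, Matrix.one_apply, Matrix.vecHead, Matrix.vecTail]
  | succ n ih =>
    rw [pow_succ, ih, Mθ_mul, pow_succ]
    have : ((n:ℝ)+1) * θ = n*θ + θ := by ring
    rw [Nat.cast_succ, this]

private lemma neg_one_eq_Mθ : (-1 : Matrix (Fin 3) (Fin 3) ℝ) = Mθ Real.pi (-1) := by
  ext i j
  fin_cases i <;> fin_cases j <;> simp [Mθ, Matrix.one_apply, Matrix.vecHead, Matrix.vecTail]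

/-- The cyclic group generated by the rotatory reflection `ργ` (rotation by
`2π/q` about the `z`-axis composed with reflection in the `xy`-plane)
contains `-I` if and only if `q ≡ 2 (mod 4)`. -/
theorem antipodal_in_rotatory_reflection_group_iff (q : ℕ) (hq : 0 < q)
    (ρ γ : Matrix (Fin 3) (Fin 3) ℝ)
    (hρ : ρ = !![Real.cos (2 * Real.pi / q), -Real.sin (2 * Real.pi / q), 0;
                 Real.sin (2 * Real.pi / q),  Real.cos (2 * Real.pi / q), 0;
                 0, 0, 1])
    (hγ : γ = !![1, 0, 0; 0, 1, 0; 0, 0, -1]) :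
    ((-1 : Matrix (Fin 3) (Fin 3) ℝ) ∈ Submonoid.powers (ρ * γ)) ↔ q % 4 = 2 := by
  have hq' : (q : ℝ) ≠ 0 := Nat.cast_ne_zero.2 hq.ne'
  have hrg : ρ * γ = Mθ (2 * Real.pi / q) (-1) := by
    subst hρ hγ
    ext i j
    fin_cases i <;> fin_cases j <;>
      simp [Mθ, Matrix.mul_apply, Fin.sum_univ_three, Matrix.vecHead, Matrix.vecTail]
  rw [hrg, Submonoid.mem_powers_iff]
  constructor
  · rintro ⟨n, hn⟩
    rw [Mθ_pow, neg_one_eq_Mθ] at hn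
    have hcos : Real.cos (n * (2 * Real.pi / q)) = -1 := by
      have := congrFun (congrFun hn.symm 0) 0
      simpa [Mθ] using this.symm
    have hε : ((-1 : ℝ)) ^ n = -1 := by
      have := congrFun (congrFun hn.symm 2) 2
      simpa [Mθ] using this.symm
    have hodd : Odd n := by
      rcases Nat.even_or_odd n with he | ho
      · exfalso; rw [he.neg_one_pow] at hε; norm_num at hε
      · exact ho
    obtain ⟨k, hk⟩ := Real.cos_eq_neg_one_iff.1 hcos
    -- π + k * (2π) = n * (2π/q)  ⇒  q * (2k+1) = 2n
    have hreal : (q : ℝ) * (2 * k + 1) = 2 * n := by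
      have hπ : Real.pi ≠ 0 := Real.pi_ne_zero
      field_simp at hk
      exact mul_left_cancel₀ hπ (by linear_combination π * hk)
    have hint : (q : ℤ) * (2 * k + 1) = 2 * n := by exact_mod_cast hreal
    -- q is even
    have h2 : (2 : ℤ) ∣ (q : ℤ) := by
      have : (2 : ℤ) ∣ (q : ℤ) * (2 * k + 1) := ⟨n, hint⟩
      rcases Int.prime_two.dvd_mul.mp this with h | h
      · exact h
      · omega
    obtain ⟨m, hm⟩ := h2
    have hn' : (n : ℤ) = m * (2 * k + 1) := by
      have h2' : (2 : ℤ) * ((n : ℤ)) = 2 * (m * (2 * k + 1)) := by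
        linear_combination -hint + (2 * k + 1) * hm
      exact mul_left_cancel₀ two_ne_zero h2'
    have hoddn : Odd (n : ℤ) := by exact_mod_cast hodd
    rw [hn'] at hoddn
    have hoddm : Odd m := (Int.odd_mul.mp hoddn).1
    obtain ⟨t, ht⟩ := hoddm
    have : (q : ℤ) = 4 * t + 2 := by rw [hm, ht]; ring
    omega
  · intro h4
    obtain ⟨t, ht⟩ : ∃ t, q = 4 * t + 2 := ⟨q / 4, by omega⟩
    refine ⟨2 * t + 1, ?_⟩
    rw [Mθ_pow, neg_one_eq_Mθ]
    have hθ : ((2 * t + 1 : ℕ) : ℝ) * (2 * Real.pi / q) = Real.pi := by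
      rw [ht]
      push_cast
      field_simp
      ring
    have hε : ((-1 : ℝ)) ^ (2 * t + 1) = -1 := Odd.neg_one_pow ⟨t, by ring⟩
    rw [hθ, hε]
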